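/- Let m be a nonempty finite type with N = Fintype.card m. Let O, O', U, U' : Matrix m m ℂ with Oᴴ = O, O'ᴴ = O', O * O = 1, O' * O' = 1, Uᴴ * U = 1, U * Uᴴ = 1, U'ᴴ * U' = 1, and U' * U'ᴴ = 1. Define v = vec (O' * U' * (Uᴴ * O * U) * U'ᴴ), w = vec (1 : Matrix m m ℂ), and the ancilla state ψ : ((m × m) × Fin 2) → ℂ by ψ (z, b) = (Real.sqrt (2 * N))⁻¹ * (if b = 1 then v z else w z). Let X₂ : Matrix (Fin 2) (Fin 2) ℂ be the Pauli flip matrix !![0, 1; 1, 0]. Then the interferometric circuit computes the two-point correlator: ∑_{(z,b)} star (ψ (z, b)) * ((((1 : Matrix (m × m) (m × m) ℂ) ⊗ₖ X₂) *ᵥ ψ) (z, b)) = trace ((U'ᴴ * O' * U') * (Uᴴ * O * U)) / N. -/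

import Mathlib

open Kronecker Matrix

/-- Row-stacking vectorization of a square matrix. -/
def vec {m : Type*} (O : Matrix m m ℂ) : m × m → ℂ := fun z => O z.1 z.2

/-- The interferometric circuit computes the two-point correlator
`trace(O'(t') O(t)) / N` as the expectation value of Pauli-`X` on the ancilla. -/
theorem interferometric_two_point_correlator {m : Type*} [Fintype m] [DecidableEq m]
    [Nonempty m]
    (O O' U U' : Matrix m m ℂ)
    (hO : Oᴴ = O) (hO' : O'ᴴ = O')
    (hOsq : O * O = 1) (hO'sq : O' * O' = 1)
    (hU : Uᴴ * U = 1) (hU' : U * Uᴴ = 1)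
    (hV : U'ᴴ * U' = 1) (hV' : U' * U'ᴴ = 1)
    (N : ℕ) (hN : N = Fintype.card m)
    (v w : m × m → ℂ)
    (hv : v = _root_.vec (O' * U' * (Uᴴ * O * U) * U'ᴴ))
    (hw : w = _root_.vec (1 : Matrix m m ℂ))
    (ψ : (m × m) × Fin 2 → ℂ)
    (hψ : ∀ z : m × m, ∀ b : Fin 2,
      ψ (z, b) = ((Real.sqrt (2 * N) : ℂ))⁻¹ * (if b = 1 then v z else w z))
    (X₂ : Matrix (Fin 2) (Fin 2) ℂ) (hX₂ : X₂ = !![0, 1; 1, 0]) :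
    ∑ zb : (m × m) × Fin 2,
        star (ψ zb) * ((((1 : Matrix (m × m) (m × m) ℂ) ⊗ₖ X₂) *ᵥ ψ) zb) =
      ((U'ᴴ * O' * U') * (Uᴴ * O * U)).trace / N := by
  have hNpos : 0 < N := by
    rw [hN]; exact Fintype.card_pos
  set A := Uᴴ * O * U with hA
  set M := O' * U' * A * U'ᴴ with hM
  set T := ((U'ᴴ * O' * U') * A).trace with hT
  have htrM : M.trace = T := by
    rw [hM, hT, Matrix.trace_mul_comm]
    simp [Matrix.mul_assoc]
  have hMH : Mᴴ = U' * A * (U'ᴴ * O') := by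
    simp [hM, hA, conjTranspose_mul, hO, hO', Matrix.mul_assoc]
  have hconj : star T = T := by
    rw [← htrM, ← Matrix.trace_conjTranspose, hMH, Matrix.trace_mul_comm, hM]
    simp only [Matrix.mul_assoc]
    rw [Matrix.trace_mul_comm]
    simp [Matrix.mul_assoc]
  set c : ℂ := ((Real.sqrt (2 * N) : ℝ) : ℂ)⁻¹ with hc
  have hcstar : star c = c := by
    simp [hc, ← Complex.ofReal_inv]
  have hcc : c * c = (2 * N : ℂ)⁻¹ := by
    rw [hc, ← mul_inv, ← Complex.ofReal_mul]
    rw [Real.mul_self_sqrt (by positivity)]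
    push_cast
    ring_nf
  have hv' : ∀ z : m × m, v z = M z.1 z.2 := by
    intro z; rw [hv]; rfl
  have hw' : ∀ z : m × m, w z = if z.1 = z.2 then 1 else 0 := by
    intro z; rw [hw]; simp [_root_.vec, Matrix.one_apply]
  have hmv : ∀ z : m × m, ∀ b : Fin 2,
      (((1 : Matrix (m × m) (m × m) ℂ) ⊗ₖ X₂) *ᵥ ψ) (z, b)
        = X₂ b 0 * ψ (z, 0) + X₂ b 1 * ψ (z, 1) := by
    intro z b
    simp [Matrix.mulVec, dotProduct, Fintype.sum_prod_type, Fin.sum_univ_two,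
      Matrix.one_apply, ite_mul, Finset.sum_ite_eq]
  have hS1 : ∑ z : m × m, star (w z) * v z = T := by
    rw [← htrM]
    simp only [hv', hw']
    rw [Fintype.sum_prod_type]
    simp [Matrix.trace, Matrix.diag, apply_ite, Finset.sum_ite_eq]
  have hS2 : ∑ z : m × m, star (v z) * w z = T := by
    have : ∑ z : m × m, star (v z) * w z = star (∑ z : m × m, star (w z) * v z) := by
      simp [star_sum, mul_comm]
    rw [this, hS1, hconj]
  calc ∑ zb : (m × m) × Fin 2,
        star (ψ zb) * ((((1 : Matrix (m × m) (m × m) ℂ) ⊗ₖ X₂) *ᵥ ψ) zb)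
      = ∑ z : m × m, (c * c) * (star (w z) * v z + star (v z) * w z) := by
        rw [Fintype.sum_prod_type]
        refine Finset.sum_congr rfl fun z _ => ?_
        rw [Fin.sum_univ_two, hmv z 0, hmv z 1, hψ z 0, hψ z 1, hX₂]
        simp only [Matrix.cons_val', Matrix.cons_val_zero, Matrix.cons_val_one,
          Matrix.head_cons, Matrix.head_fin_const, Matrix.empty_val',
          Matrix.cons_val_fin_one, Matrix.of_apply]
        simp only [Fin.isValue, if_pos, if_neg, one_ne_zero]
        norm_num
        rw [show (starRingEnd ℂ) c = c from hcstar]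
        ring
    _ = (c * c) * (T + T) := by
        rw [← Finset.mul_sum, Finset.sum_add_distrib, hS1, hS2]
    _ = T / N := by
        rw [hcc]
        have : (N : ℂ) ≠ 0 := by exact_mod_cast hNpos.ne'
        field_simp
        ring
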